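/- Let Z be a stability function on an abelian category 𝒜 and let E be a nonzero object. If 0 = E₀ ⊊ E₁ ⊊ … ⊊ Eₙ = E and 0 = E′₀ ⊊ E′₁ ⊊ … ⊊ E′ₘ = E are two Harder–Narasimhan filtrations of E (i.e., chains of subobjects whose subquotients E_i/E_{i−1}, respectively E′_j/E′_{j−1}, are Z-semistable with strictly decreasing slopes), then n = m and E_i = E′_i as subobjects of E for all i. -/

import Mathlib

open CategoryTheory CategoryTheory.Limits

namespace BridgelandNotes

variable {𝒜 : Type*} [Category 𝒜] [Abelian 𝒜]

/-- `Z` is additive on short exact sequences: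
`Z(E) = Z(F) + Z(G)` whenever `0 → F → E → G → 0` is exact in `𝒜`. -/
def AdditiveOnSES (Z : 𝒜 → ℂ) : Prop :=
  ∀ S : ShortComplex 𝒜, S.ShortExact → Z S.X₂ = Z S.X₁ + Z S.X₃

/-- `Z` is a stability function on the abelian category `𝒜`: it is additive on short
exact sequences, every nonzero object satisfies `Im Z(E) ≥ 0`, and `Im Z(E) = 0`
implies `Re Z(E) < 0`. -/
def IsStabilityFunction (Z : 𝒜 → ℂ) : Prop :=
  AdditiveOnSES Z ∧
    ∀ E : 𝒜, ¬ IsZero E → 0 ≤ (Z E).im ∧ ((Z E).im = 0 → (Z E).re < 0)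

/-- The generalized rank `R(E) := Im Z(E)`. -/
def genR (Z : 𝒜 → ℂ) (E : 𝒜) : ℝ := (Z E).im

/-- The generalized degree `D(E) := -Re Z(E)`. -/
def genD (Z : 𝒜 → ℂ) (E : 𝒜) : ℝ := -(Z E).re

/-- The slope inequality `μ(A) ≤ μ(B)`, encoded for nonzero objects by
cross-multiplication: `D(A)·R(B) ≤ D(B)·R(A)`. -/
def SlopeLE (Z : 𝒜 → ℂ) (A B : 𝒜) : Prop :=
  genD Z A * genR Z B ≤ genD Z B * genR Z A

/-- The strict slope inequality `μ(A) < μ(B)`, encoded for nonzero objects by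
cross-multiplication: `D(A)·R(B) < D(B)·R(A)`. -/
def SlopeLT (Z : 𝒜 → ℂ) (A B : 𝒜) : Prop :=
  genD Z A * genR Z B < genD Z B * genR Z A

/-- A nonzero object `E` is `Z`-semistable if `μ(F) ≤ μ(E)` for every nonzero proper
subobject `F` of `E`. -/
def IsSemistable (Z : 𝒜 → ℂ) (E : 𝒜) : Prop :=
  ¬ IsZero E ∧
    ∀ (F : 𝒜) (f : F ⟶ E), Mono f → ¬ IsZero F → ¬ IsIso f → SlopeLE Z F E

/-- The abelian category `𝒜` is noetherian: every ascending chain of subobjects of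
any object stabilizes. -/
def NoetherianCategory (𝒜 : Type*) [Category 𝒜] [Abelian 𝒜] : Prop :=
  ∀ (E : 𝒜) (f : ℕ →o Subobject E), ∃ N : ℕ, ∀ n : ℕ, N ≤ n → f n = f N

/-- The image of the generalized rank `R = Im ∘ Z` is a discrete subset of `ℝ`. -/
def HasDiscreteRank (Z : 𝒜 → ℂ) : Prop :=
  ∀ x ∈ Set.range (genR Z), ∃ ε > (0 : ℝ), ∀ y ∈ Set.range (genR Z), |y - x| < ε → y = x

/-- The subquotient `T/S` of two nested subobjects `S ≤ T` of an object of `𝒜`. -/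
noncomputable def subquot {E : 𝒜} (S T : Subobject E) (h : S ≤ T) : 𝒜 :=
  cokernel (Subobject.ofLE S T h)

/-- `(n, F)` is a Harder–Narasimhan filtration of `E`: a chain of subobjects
`0 = F 0 ⊊ F 1 ⊊ … ⊊ F n = E` whose subquotients are `Z`-semistable with strictly
decreasing slopes. -/
def IsHNFiltration (Z : 𝒜 → ℂ) {E : 𝒜} (n : ℕ) (F : ℕ → Subobject E)
    (hF : ∀ i, i < n → F i < F (i + 1)) : Prop :=
  F 0 = ⊥ ∧ F n = ⊤ ∧
    (∀ i (h : i < n), IsSemistable Z (subquot (F i) (F (i + 1)) (hF i h).le)) ∧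
    ∀ i (h : i + 1 < n),
      SlopeLT Z (subquot (F (i + 1)) (F (i + 2)) (hF (i + 1) h).le)
        (subquot (F i) (F (i + 1)) (hF i (Nat.lt_of_succ_lt h)).le)

/-! ### Auxiliary lemmas -/

section Aux

variable {Z : 𝒜 → ℂ}

/-- Additivity for the short exact sequence determined by a mono. -/
lemma Z_ses_mono (hZ : AdditiveOnSES Z) {X Y : 𝒜} (f : X ⟶ Y) [Mono f] :
    Z Y = Z X + Z (cokernel f) := by
  have hS : (ShortComplex.mk f (cokernel.π f) (cokernel.condition f)).ShortExact :=
    { exact := ShortComplex.exact_of_g_is_cokernel _ (cokernelIsCokernel f) }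
  exact hZ _ hS

/-- Additivity for the short exact sequence determined by an epi. -/
lemma Z_ses_epi (hZ : AdditiveOnSES Z) {X Y : 𝒜} (f : X ⟶ Y) [Epi f] :
    Z X = Z (kernel f) + Z Y := by
  have hS : (ShortComplex.mk (kernel.ι f) f (kernel.condition f)).ShortExact :=
    { exact := ShortComplex.exact_of_f_is_kernel _ (kernelIsKernel f) }
  exact hZ _ hS

lemma Z_zero_obj (hZ : AdditiveOnSES Z) {X : 𝒜} (hX : IsZero X) : Z X = 0 := by
  have hS : (ShortComplex.mk (𝟙 X) (𝟙 X) (hX.eq_of_src _ _)).ShortExact :=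
    { exact := ShortComplex.exact_of_isZero_X₂ _ hX }
  have := hZ _ hS
  simpa using this.symm

lemma Z_iso (hZ : AdditiveOnSES Z) {X Y : 𝒜} (e : X ≅ Y) : Z X = Z Y := by
  have h := Z_ses_mono hZ e.hom
  have hz : IsZero (cokernel e.hom) := by
    rw [IsZero.iff_id_eq_zero, ← cancel_epi (cokernel.π e.hom)]
    simp [cokernel.π_of_epi]
  rw [Z_zero_obj hZ hz] at h
  simp at h
  exact h.symm

/-! #### Real arithmetic for cross-multiplied slopes -/

lemma cross_trans {dA rA dB rB dC rC : ℝ} (hrA : 0 ≤ rA) (_hdA : rA = 0 → 0 < dA)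
    (hrB : 0 ≤ rB) (hdB : rB = 0 → 0 < dB) (hrC : 0 ≤ rC) (hdC : rC = 0 → 0 < dC)
    (h1 : dA * rB ≤ dB * rA) (h2 : dB * rC ≤ dC * rB) : dA * rC ≤ dC * rA := by
  rcases eq_or_lt_of_le hrB with hB0 | hBpos
  · obtain rfl : rB = 0 := hB0.symm
    have hdBpos := hdB rfl
    have hrC0 : rC = 0 := by
      by_contra hne
      have hCpos : 0 < rC := lt_of_le_of_ne hrC (Ne.symm hne)
      nlinarith [mul_pos hdBpos hCpos]
    subst hrC0
    simpa using mul_nonneg (hdC rfl).le hrA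
  · nlinarith [mul_le_mul_of_nonneg_right h1 hrC, mul_le_mul_of_nonneg_left h2 hrA]

lemma cross_lt_of_le_of_lt {dA rA dB rB dC rC : ℝ} (hrA : 0 ≤ rA) (hdA : rA = 0 → 0 < dA)
    (hrB : 0 ≤ rB) (hdB : rB = 0 → 0 < dB) (hrC : 0 ≤ rC) (_hdC : rC = 0 → 0 < dC)
    (h1 : dA * rB ≤ dB * rA) (h2 : dB * rC < dC * rB) : dA * rC < dC * rA := by
  rcases eq_or_lt_of_le hrA with hA0 | hApos
  · obtain rfl : rA = 0 := hA0.symm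
    have hdApos := hdA rfl
    have hrB0 : rB = 0 := by
      by_contra hne
      have hBpos : 0 < rB := lt_of_le_of_ne hrB (Ne.symm hne)
      nlinarith [mul_pos hdApos hBpos]
    subst hrB0
    have hdBpos := hdB rfl
    exfalso
    nlinarith [mul_nonneg hdBpos.le hrC]
  · rcases eq_or_lt_of_le hrB with hB0 | hBpos
    · obtain rfl : rB = 0 := hB0.symm
      have hdBpos := hdB rfl
      exfalso
      nlinarith [mul_nonneg hdBpos.le hrC]
    · nlinarith [mul_le_mul_of_nonneg_right h1 hrC, mul_lt_mul_of_pos_left h2 hApos]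

lemma cross_lt_of_lt_of_le {dA rA dB rB dC rC : ℝ} (hrA : 0 ≤ rA) (hdA : rA = 0 → 0 < dA)
    (hrB : 0 ≤ rB) (hdB : rB = 0 → 0 < dB) (hrC : 0 ≤ rC) (hdC : rC = 0 → 0 < dC)
    (h1 : dA * rB < dB * rA) (h2 : dB * rC ≤ dC * rB) : dA * rC < dC * rA := by
  rcases eq_or_lt_of_le hrB with hB0 | hBpos
  · obtain rfl : rB = 0 := hB0.symm
    have hdBpos := hdB rfl
    have hrC0 : rC = 0 := by
      by_contra hne
      have hCpos : 0 < rC := lt_of_le_of_ne hrC (Ne.symm hne)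
      nlinarith [mul_pos hdBpos hCpos]
    subst hrC0
    have hdCpos := hdC rfl
    have hrApos : 0 < rA := by
      rcases eq_or_lt_of_le hrA with h | h
      · exfalso; rw [← h] at h1; simp at h1
      · exact h
    simpa using mul_pos hdCpos hrApos
  · rcases eq_or_lt_of_le hrC with hC0 | hCpos
    · obtain rfl : rC = 0 := hC0.symm
      have hdCpos := hdC rfl
      have hrApos : 0 < rA := by
        rcases eq_or_lt_of_le hrA with h | h
        · exfalso
          obtain rfl : rA = 0 := h.symm
          have hdApos := hdA rfl
          nlinarith [mul_nonneg hdApos.le hrB]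
        · exact h
      simpa using mul_pos hdCpos hrApos
    · nlinarith [mul_lt_mul_of_pos_right h1 hCpos, mul_le_mul_of_nonneg_left h2 hrA]

/-! #### Slope lemmas -/

lemma stab_facts (hZ : IsStabilityFunction Z) {A : 𝒜} (hA : ¬ IsZero A) :
    0 ≤ genR Z A ∧ (genR Z A = 0 → 0 < genD Z A) := by
  obtain ⟨h1, h2⟩ := hZ.2 A hA
  exact ⟨h1, fun h => neg_pos.mpr (h2 h)⟩

lemma slopeLE_trans (hZ : IsStabilityFunction Z) {A B C : 𝒜}
    (hA : ¬ IsZero A) (hB : ¬ IsZero B) (hC : ¬ IsZero C)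
    (h1 : SlopeLE Z A B) (h2 : SlopeLE Z B C) : SlopeLE Z A C :=
  cross_trans (stab_facts hZ hA).1 (stab_facts hZ hA).2 (stab_facts hZ hB).1
    (stab_facts hZ hB).2 (stab_facts hZ hC).1 (stab_facts hZ hC).2 h1 h2

lemma slopeLT_of_le_of_lt (hZ : IsStabilityFunction Z) {A B C : 𝒜}
    (hA : ¬ IsZero A) (hB : ¬ IsZero B) (hC : ¬ IsZero C)
    (h1 : SlopeLE Z A B) (h2 : SlopeLT Z B C) : SlopeLT Z A C :=
  cross_lt_of_le_of_lt (stab_facts hZ hA).1 (stab_facts hZ hA).2 (stab_facts hZ hB).1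
    (stab_facts hZ hB).2 (stab_facts hZ hC).1 (stab_facts hZ hC).2 h1 h2

lemma slopeLT_of_lt_of_le (hZ : IsStabilityFunction Z) {A B C : 𝒜}
    (hA : ¬ IsZero A) (hB : ¬ IsZero B) (hC : ¬ IsZero C)
    (h1 : SlopeLT Z A B) (h2 : SlopeLE Z B C) : SlopeLT Z A C :=
  cross_lt_of_lt_of_le (stab_facts hZ hA).1 (stab_facts hZ hA).2 (stab_facts hZ hB).1
    (stab_facts hZ hB).2 (stab_facts hZ hC).1 (stab_facts hZ hC).2 h1 h2

lemma slopeLT_trans (hZ : IsStabilityFunction Z) {A B C : 𝒜}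
    (hA : ¬ IsZero A) (hB : ¬ IsZero B) (hC : ¬ IsZero C)
    (h1 : SlopeLT Z A B) (h2 : SlopeLT Z B C) : SlopeLT Z A C :=
  slopeLT_of_lt_of_le hZ hA hB hC h1 (le_of_lt h2)

lemma slope_asymm {A B : 𝒜} (h1 : SlopeLE Z A B) (h2 : SlopeLT Z B A) : False := by
  unfold SlopeLE at h1
  unfold SlopeLT at h2
  linarith

/-- The seesaw : if `Z B = Z A + Z C` and `μ(A) ≤ μ(B)` then `μ(B) ≤ μ(C)`. -/
lemma seesaw_mid_right {A B C : 𝒜} (h : Z B = Z A + Z C) (hle : SlopeLE Z A B) :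
    SlopeLE Z B C := by
  have hR : genR Z B = genR Z A + genR Z C := by simp [genR, h]
  have hD : genD Z B = genD Z A + genD Z C := by simp [genD, h]; ring
  unfold SlopeLE at hle ⊢
  rw [hR, hD] at hle ⊢
  ring_nf at hle ⊢
  linarith

/-- A nonzero quotient of a semistable object has slope at least that of the object. -/
lemma quot_slopeLE (hZ : IsStabilityFunction Z) {A B : 𝒜} (hA : IsSemistable Z A)
    (hB : ¬ IsZero B) (q : A ⟶ B) [Epi q] : SlopeLE Z A B := by
  have hsum : Z A = Z (kernel q) + Z B := Z_ses_epi hZ.1 q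
  have hK : SlopeLE Z (kernel q) A := by
    by_cases h0 : IsZero (kernel q)
    · have hz := Z_zero_obj hZ.1 h0
      unfold SlopeLE genD genR
      rw [hz]
      simp
    · by_cases hi : IsIso (kernel.ι q)
      · exfalso
        haveI := hi
        have hq : q = 0 := by
          rw [← cancel_epi (kernel.ι q), kernel.condition, comp_zero]
        refine hB ?_
        rw [IsZero.iff_id_eq_zero, ← cancel_epi q, hq]
        simp
      · exact hA.2 _ _ inferInstance h0 hi
  exact seesaw_mid_right hsum hK

/-- A nonzero subobject of a semistable object has slope at most that of the object. -/
lemma sub_slopeLE (hZ : IsStabilityFunction Z) {B Q : 𝒜} (hQ : IsSemistable Z Q)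
    (hB : ¬ IsZero B) (f : B ⟶ Q) [Mono f] : SlopeLE Z B Q := by
  by_cases hi : IsIso f
  · have h := Z_iso hZ.1 (asIso f)
    unfold SlopeLE genD genR
    rw [h]
  · exact hQ.2 _ f inferInstance hB hi

/-- A nonzero morphism between semistable objects forces `μ(A) ≤ μ(Q)`. -/
lemma hom_slopeLE (hZ : IsStabilityFunction Z) {A Q : 𝒜} (hA : IsSemistable Z A)
    (hQ : IsSemistable Z Q) (c : A ⟶ Q) (hc : c ≠ 0) : SlopeLE Z A Q := by
  have hB : ¬ IsZero (Abelian.image c) := by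
    intro h
    refine hc ?_
    rw [← Abelian.image.fac c, h.eq_zero_of_src (Abelian.image.ι c), comp_zero]
  have h1 : SlopeLE Z A (Abelian.image c) := quot_slopeLE hZ hA hB (Abelian.factorThruImage c)
  have h2 : SlopeLE Z (Abelian.image c) Q := sub_slopeLE hZ hQ hB (Abelian.image.ι c)
  exact slopeLE_trans hZ hA.1 hB hQ.1 h1 h2

/-! #### Subobject lemmas -/

lemma subquot_nonzero {E : 𝒜} {S T : Subobject E} (h : S < T) :
    ¬ IsZero (subquot S T h.le) := by
  intro hz
  haveI hepi : Epi (Subobject.ofLE S T h.le) :=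
    Preadditive.epi_of_cokernel_zero (hz.eq_zero_of_tgt _)
  haveI : IsIso (Subobject.ofLE S T h.le) := isIso_of_mono_of_epi _
  have hTS : T ≤ S := Subobject.le_of_comm (inv (Subobject.ofLE S T h.le)) (by
    rw [← Subobject.ofLE_arrow h.le, IsIso.inv_hom_id_assoc])
  exact h.not_ge hTS

lemma subobject_le_of_comp_zero {E : 𝒜} {S T A : Subobject E} (hST : S ≤ T) (hAT : A ≤ T)
    (h : Subobject.ofLE A T hAT ≫ cokernel.π (Subobject.ofLE S T hST) = 0) : A ≤ S :=
  Subobject.le_of_comm (Abelian.monoLift _ _ h) (by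
    rw [← Subobject.ofLE_arrow hST, ← Category.assoc, Abelian.monoLift_comp,
      Subobject.ofLE_arrow])

/-- The induced map between subquotients. -/
noncomputable def qmap {E : 𝒜} {G A S T : Subobject E} (hGA : G ≤ A) (hST : S ≤ T)
    (hGS : G ≤ S) (hAT : A ≤ T) : subquot G A hGA ⟶ subquot S T hST :=
  cokernel.desc _ (Subobject.ofLE A T hAT ≫ cokernel.π (Subobject.ofLE S T hST)) (by
    show Subobject.ofLE G A hGA ≫ Subobject.ofLE A T hAT ≫ cokernel.π (Subobject.ofLE S T hST) = 0
    rw [← Category.assoc, Subobject.ofLE_comp_ofLE,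
      ← Subobject.ofLE_comp_ofLE G S T hGS hST, Category.assoc, cokernel.condition, comp_zero])

lemma le_of_qmap_zero {E : 𝒜} {G A S T : Subobject E} {hGA : G ≤ A} {hST : S ≤ T}
    {hGS : G ≤ S} {hAT : A ≤ T} (h : qmap hGA hST hGS hAT = 0) : A ≤ S := by
  apply subobject_le_of_comp_zero hST hAT
  have h2 : cokernel.π (Subobject.ofLE G A hGA) ≫ qmap hGA hST hGS hAT =
      Subobject.ofLE A T hAT ≫ cokernel.π (Subobject.ofLE S T hST) :=
    cokernel.π_desc _ _ _
  rw [h] at h2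
  erw [comp_zero] at h2
  exact h2.symm

lemma subquot_congr {E : 𝒜} {S S' T : Subobject E} (e : S = S') (h : S ≤ T) :
    subquot S T h = subquot S' T (e ▸ h) := by subst e; rfl

lemma chain_mono {E : 𝒜} {n : ℕ} {F : ℕ → Subobject E}
    (hF : ∀ i, i < n → F i < F (i + 1)) :
    ∀ i j, i ≤ j → j ≤ n → F i ≤ F j := by
  intro i j hij hjn
  induction j with
  | zero =>
    obtain rfl : i = 0 := Nat.le_zero.mp hij
    exact le_rfl
  | succ j ih =>
    rcases Nat.lt_or_ge i (j + 1) with h | h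
    · exact le_trans (ih (Nat.lt_succ_iff.mp h) (le_trans (Nat.le_succ j) hjn))
        (hF j (Nat.lt_of_succ_le hjn)).le
    · obtain rfl : i = j + 1 := le_antisymm hij h
      exact le_rfl

lemma chain_slope_lt (hZ : IsStabilityFunction Z) {E : 𝒜} {n : ℕ} {F : ℕ → Subobject E}
    (hF : ∀ i, i < n → F i < F (i + 1))
    (hlt : ∀ i (h : i + 1 < n),
      SlopeLT Z (subquot (F (i + 1)) (F (i + 2)) (hF (i + 1) h).le)
        (subquot (F i) (F (i + 1)) (hF i (Nat.lt_of_succ_lt h)).le)) :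
    ∀ i j (hij : i < j) (hj : j < n),
      SlopeLT Z (subquot (F j) (F (j + 1)) (hF j hj).le)
        (subquot (F i) (F (i + 1)) (hF i (lt_trans hij hj)).le) := by
  intro i j
  induction j with
  | zero => intro hij; exact absurd hij (Nat.not_lt_zero i)
  | succ j ih =>
    intro hij hj
    rcases Nat.lt_or_ge i j with h | h
    · have h1 := ih h (Nat.lt_of_succ_lt hj)
      have h2 := hlt j hj
      exact slopeLT_trans hZ (subquot_nonzero (hF (j + 1) hj))
        (subquot_nonzero (hF j (Nat.lt_of_succ_lt hj)))
        (subquot_nonzero (hF i (lt_trans hij hj))) h2 h1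
    · obtain rfl : i = j := le_antisymm (Nat.lt_succ_iff.mp hij) h
      exact hlt i hj

/-- Key lemma: if `A` is a subobject of `E` with `F 0 < A` and `A/F 0` semistable, then
its slope is at most that of the first subquotient of the filtration, with strict
inequality unless `A ≤ F 1`. -/
lemma aux_le (hZ : IsStabilityFunction Z) {E : 𝒜} {n : ℕ} {F : ℕ → Subobject E}
    (hF : ∀ i, i < n → F i < F (i + 1)) (hFn : F n = ⊤)
    (hss : ∀ i (h : i < n), IsSemistable Z (subquot (F i) (F (i + 1)) (hF i h).le))
    (hlt : ∀ i (h : i + 1 < n),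
      SlopeLT Z (subquot (F (i + 1)) (F (i + 2)) (hF (i + 1) h).le)
        (subquot (F i) (F (i + 1)) (hF i (Nat.lt_of_succ_lt h)).le))
    (A : Subobject E) (hGA : F 0 < A)
    (hA : IsSemistable Z (subquot (F 0) A hGA.le)) (hn : 0 < n) :
    SlopeLE Z (subquot (F 0) A hGA.le) (subquot (F 0) (F 1) (hF 0 hn).le) ∧
      (A ≤ F 1 ∨ SlopeLT Z (subquot (F 0) A hGA.le) (subquot (F 0) (F 1) (hF 0 hn).le)) := by
  suffices H : ∀ j, j ≤ n → A ≤ F j →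
      SlopeLE Z (subquot (F 0) A hGA.le) (subquot (F 0) (F 1) (hF 0 hn).le) ∧
      (A ≤ F 1 ∨ SlopeLT Z (subquot (F 0) A hGA.le) (subquot (F 0) (F 1) (hF 0 hn).le)) by
    exact H n le_rfl (by rw [hFn]; exact le_top)
  intro j
  induction j with
  | zero => intro _ hA0; exact absurd hA0 hGA.not_ge
  | succ j ih =>
    intro hjn hAj
    by_cases hj : A ≤ F j
    · exact ih (Nat.le_of_succ_le hjn) hj
    · have hjn' : j < n := hjn
      have hGS : F 0 ≤ F j := chain_mono hF 0 j (Nat.zero_le j) hjn'.le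
      have hc : qmap hGA.le (hF j hjn').le hGS hAj ≠ 0 := fun h0 => hj (le_of_qmap_zero h0)
      have hle : SlopeLE Z (subquot (F 0) A hGA.le)
          (subquot (F j) (F (j + 1)) (hF j hjn').le) :=
        hom_slopeLE hZ hA (hss j hjn') _ hc
      cases j with
      | zero => exact ⟨hle, Or.inl hAj⟩
      | succ j' =>
        have hqlt : SlopeLT Z (subquot (F (j' + 1)) (F (j' + 2)) (hF (j' + 1) hjn').le)
            (subquot (F 0) (F 1) (hF 0 (lt_trans (Nat.succ_pos j') hjn')).le) :=
          chain_slope_lt hZ hF hlt 0 (j' + 1) (Nat.succ_pos j') hjn'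
        have hlt2 : SlopeLT Z (subquot (F 0) A hGA.le)
            (subquot (F 0) (F 1) (hF 0 hn).le) :=
          slopeLT_of_le_of_lt hZ hA.1 (subquot_nonzero (hF (j' + 1) hjn'))
            (subquot_nonzero (hF 0 hn)) hle hqlt
        exact ⟨le_of_lt hlt2, Or.inr hlt2⟩

/-- Generalized uniqueness: two HN-type filtrations with the same bottom subobject and
top `⊤` coincide. -/
lemma hn_gen (hZ : IsStabilityFunction Z) {E : 𝒜} :
    ∀ (n m : ℕ) (F F' : ℕ → Subobject E)
      (hF : ∀ i, i < n → F i < F (i + 1)) (hF' : ∀ i, i < m → F' i < F' (i + 1))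
      (_hEq0 : F 0 = F' 0) (_hFn : F n = ⊤) (_hF'm : F' m = ⊤)
      (_hss : ∀ i (h : i < n), IsSemistable Z (subquot (F i) (F (i + 1)) (hF i h).le))
      (_hss' : ∀ i (h : i < m), IsSemistable Z (subquot (F' i) (F' (i + 1)) (hF' i h).le))
      (_hlt : ∀ i (h : i + 1 < n),
        SlopeLT Z (subquot (F (i + 1)) (F (i + 2)) (hF (i + 1) h).le)
          (subquot (F i) (F (i + 1)) (hF i (Nat.lt_of_succ_lt h)).le))
      (_hlt' : ∀ i (h : i + 1 < m),
        SlopeLT Z (subquot (F' (i + 1)) (F' (i + 2)) (hF' (i + 1) h).le)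
          (subquot (F' i) (F' (i + 1)) (hF' i (Nat.lt_of_succ_lt h)).le)),
      n = m ∧ ∀ i, i ≤ n → F i = F' i := by
  intro n
  induction n with
  | zero =>
    intro m F F' hF hF' hEq0 hFn hF'm hss hss' hlt hlt'
    cases m with
    | zero =>
      refine ⟨rfl, fun i hi => ?_⟩
      obtain rfl : i = 0 := Nat.le_zero.mp hi
      exact hEq0
    | succ m' =>
      exfalso
      have h := hF' 0 (Nat.succ_pos m')
      rw [← hEq0, hFn] at h
      exact not_top_lt h
  | succ n' ih =>
    intro m F F' hF hF' hEq0 hFn hF'm hss hss' hlt hlt'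
    cases m with
    | zero =>
      exfalso
      have h := hF 0 (Nat.succ_pos n')
      rw [hEq0, hF'm] at h
      exact not_top_lt h
    | succ m' =>
      have hn1 : 0 < n' + 1 := Nat.succ_pos _
      have hm1 : 0 < m' + 1 := Nat.succ_pos _
      -- Step 1 : F 1 = F' 1
      have hGA : F 0 < F' 1 := by rw [hEq0]; exact hF' 0 hm1
      have hA : IsSemistable Z (subquot (F 0) (F' 1) hGA.le) := by
        have h := hss' 0 hm1
        rwa [subquot_congr hEq0.symm ((hF' 0 hm1).le)] at h
      obtain ⟨le1, or1⟩ := aux_le hZ hF hFn hss hlt (F' 1) hGA hA hn1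
      have hGA' : F' 0 < F 1 := by rw [← hEq0]; exact hF 0 hn1
      have hA' : IsSemistable Z (subquot (F' 0) (F 1) hGA'.le) := by
        have h := hss 0 hn1
        rwa [subquot_congr hEq0 ((hF 0 hn1).le)] at h
      obtain ⟨le2, or2⟩ := aux_le hZ hF' hF'm hss' hlt' (F 1) hGA' hA' hm1
      rw [subquot_congr hEq0.symm hGA'.le,
        subquot_congr hEq0.symm ((hF' 0 hm1).le)] at le2
      have h11 : F 1 = F' 1 := by
        have hb1 : F' 1 ≤ F 1 := by
          rcases or1 with h | h
          · exact h
          · exact (slope_asymm le2 h).elim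
        have hb2 : F 1 ≤ F' 1 := by
          rcases or2 with h | h
          · exact h
          · rw [subquot_congr hEq0.symm hGA'.le,
              subquot_congr hEq0.symm ((hF' 0 hm1).le)] at h
            exact (slope_asymm le1 h).elim
        exact le_antisymm hb2 hb1
      -- Step 2 : induction on the shifted filtrations
      obtain ⟨hnm, hterm⟩ := ih m' (fun i => F (i + 1)) (fun i => F' (i + 1))
        (fun i hi => hF (i + 1) (Nat.succ_lt_succ hi))
        (fun i hi => hF' (i + 1) (Nat.succ_lt_succ hi))
        h11 hFn hF'm
        (fun i hi => hss (i + 1) (Nat.succ_lt_succ hi))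
        (fun i hi => hss' (i + 1) (Nat.succ_lt_succ hi))
        (fun i hi => hlt (i + 1) (Nat.succ_lt_succ hi))
        (fun i hi => hlt' (i + 1) (Nat.succ_lt_succ hi))
      refine ⟨congrArg Nat.succ hnm, fun i hi => ?_⟩
      cases i with
      | zero => exact hEq0
      | succ i' => exact hterm i' (Nat.le_of_succ_le_succ hi)

end Aux

/-- Uniqueness of Harder–Narasimhan filtrations: any two Harder–Narasimhan filtrations
of a nonzero object `E` have the same length and the same terms. -/
theorem hn_filtration_unique (Z : 𝒜 → ℂ) (hZ : IsStabilityFunction Z)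
    (E : 𝒜) (hE : ¬ IsZero E) (n m : ℕ) (F F' : ℕ → Subobject E)
    (hF : ∀ i, i < n → F i < F (i + 1)) (hF' : ∀ i, i < m → F' i < F' (i + 1))
    (h1 : IsHNFiltration Z n F hF) (h2 : IsHNFiltration Z m F' hF') :
    n = m ∧ ∀ i, i ≤ n → F i = F' i := by
  obtain ⟨h10, h1n, h1ss, h1lt⟩ := h1
  obtain ⟨h20, h2m, h2ss, h2lt⟩ := h2
  exact hn_gen hZ n m F F' hF hF' (h10.trans h20.symm) h1n h2m h1ss h2ss h1lt h2lt

end BridgelandNotes
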